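/- Let p be a symplectic partition of 2n, with p_1 and n* as defined. Then [p_1 p_1 (2n*+1)]^{SO_{2n+1}} = ((p^t)^+)_{SO_{2n+1}} if and only if ([p_1 p_1 (2n*+1)]^t)_{SO_{2n+1}} = (p^+)_{SO_{2n+1}}. (Theorem 4.2(2) of the paper, case G_n = SO_{2n+1}; note [p_1 p_1 (2n*+1)] is a partition of 2n+1.) -/
import Mathlib


/-!  Basic combinatorics of partitions: transpose, dominance order,
symplectic/orthogonal partitions, collapses and expansions, and the
dimension formulas for nilpotent orbits. -/

/-- `p` is a partition of `N`: a multiset of positive integers summing to `N`. -/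
def IsPartitionOf (N : ℕ) (p : Multiset ℕ) : Prop := p.sum = N ∧ 0 ∉ p

/-- Sum of the `k` largest parts of `p`:
`Σ_{j ≥ 1} min k #{i : p_i ≥ j}`. -/
def psum (p : Multiset ℕ) (k : ℕ) : ℕ :=
  ((Multiset.range p.sum).map (fun j => min k (p.countP (fun a => j + 1 ≤ a)))).sum

/-- Dominance order on partitions: `DomLE p q` means `p ≤ q`, i.e. for every `k`
the sum of the `k` largest parts of `p` is at most that of `q`. -/
def DomLE (p q : Multiset ℕ) : Prop := ∀ k, psum p k ≤ psum q k

/-- The transpose of a partition: its `j`-th part is `#{i : p_i ≥ j}`. -/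
def transpose (p : Multiset ℕ) : Multiset ℕ :=
  (((Multiset.range p.sum).map (fun j => p.countP (fun a => j + 1 ≤ a))).filter (0 < ·))

/-- A partition is symplectic if every odd part occurs with even multiplicity. -/
def IsSymplectic (p : Multiset ℕ) : Prop := ∀ a, Odd a → Even (p.count a)

/-- A partition is orthogonal if every even part occurs with even multiplicity. -/
def IsOrthogonal (p : Multiset ℕ) : Prop := ∀ a, Even a → Even (p.count a)

/-- `q` is the `P`-collapse of `p` (as partitions of `N`): the largest partition of `N`
satisfying `P` which is `≤ p` in the dominance order. -/
def IsCollapseOf (P : Multiset ℕ → Prop) (N : ℕ) (p q : Multiset ℕ) : Prop :=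
  IsPartitionOf N q ∧ P q ∧ DomLE q p ∧
    ∀ q', IsPartitionOf N q' → P q' → DomLE q' p → DomLE q' q

open Classical in
noncomputable def collapseOf (P : Multiset ℕ → Prop) (N : ℕ) (p : Multiset ℕ) : Multiset ℕ :=
  if h : ∃ q, IsCollapseOf P N p q then h.choose else 0

/-- The symplectic collapse `p_{Sp_N}` of a partition `p` of `N` (`N` even). -/
noncomputable def sympCollapse (N : ℕ) (p : Multiset ℕ) : Multiset ℕ :=
  collapseOf IsSymplectic N p

/-- The orthogonal collapse `p_{SO_N}` of a partition `p` of `N`. -/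
noncomputable def orthCollapse (N : ℕ) (p : Multiset ℕ) : Multiset ℕ :=
  collapseOf IsOrthogonal N p

/-- A symplectic partition `p` of `N` is special if `(((p^t)_{Sp_N})^t)_{Sp_N} = p`. -/
def IsSpecialSymp (N : ℕ) (p : Multiset ℕ) : Prop :=
  sympCollapse N (transpose (sympCollapse N (transpose p))) = p

/-- An orthogonal partition `p` of `N` is special if `(((p^t)_{SO_N})^t)_{SO_N} = p`. -/
def IsSpecialOrth (N : ℕ) (p : Multiset ℕ) : Prop :=
  orthCollapse N (transpose (orthCollapse N (transpose p))) = p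

/-- `q` is the `(P, Sp)`-expansion of `p`: the smallest partition of `N` satisfying
`P` and the speciality predicate `Sp` which is `≥ p` in the dominance order. -/
def IsExpansionOf (P Sp : Multiset ℕ → Prop) (N : ℕ) (p q : Multiset ℕ) : Prop :=
  IsPartitionOf N q ∧ P q ∧ Sp q ∧ DomLE p q ∧
    ∀ q', IsPartitionOf N q' → P q' → Sp q' → DomLE p q' → DomLE q q'

open Classical in
noncomputable def expansionOf (P Sp : Multiset ℕ → Prop) (N : ℕ) (p : Multiset ℕ) :
    Multiset ℕ :=
  if h : ∃ q, IsExpansionOf P Sp N p q then h.choose else 0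

/-- The symplectic expansion `p^{Sp_N}`: the smallest special symplectic partition of `N`
which is `≥ p` in the dominance order. -/
noncomputable def sympExpansion (N : ℕ) (p : Multiset ℕ) : Multiset ℕ :=
  expansionOf IsSymplectic (IsSpecialSymp N) N p

/-- The orthogonal expansion `p^{SO_N}`: the smallest special orthogonal partition of `N`
which is `≥ p` in the dominance order. -/
noncomputable def orthExpansion (N : ℕ) (p : Multiset ℕ) : Multiset ℕ :=
  expansionOf IsOrthogonal (IsSpecialOrth N) N p

/-- The smallest part of a (nonempty) partition. -/
def minPart (p : Multiset ℕ) : ℕ := p.sum - psum p (Multiset.card p - 1)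

/-- The largest part of a partition. -/
def maxPart (p : Multiset ℕ) : ℕ := psum p 1

/-- `p^-`: decrease the smallest part of `p` by `1` (deleting it if it becomes `0`). -/
def pMinus (p : Multiset ℕ) : Multiset ℕ :=
  ((minPart p - 1) ::ₘ p.erase (minPart p)).filter (0 < ·)

/-- `p^+`: increase the largest part of `p` by `1`. -/
def pPlus (p : Multiset ℕ) : Multiset ℕ :=
  (maxPart p + 1) ::ₘ p.erase (maxPart p)

/-- `dim_{sp_{2n}}(p) = 2n² + n − ½(Σ_i ((p^t)_i)² + #{i : p_i odd})`,
the dimension of the nilpotent orbit of `sp_{2n}` attached to a symplectic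
partition `p` of `2n`. -/
def dimSp (n : ℕ) (p : Multiset ℕ) : ℚ :=
  (2 * (n : ℚ) ^ 2 + n) -
    (((transpose p).map (fun x => (x : ℚ) ^ 2)).sum + (p.countP (Odd ·) : ℚ)) / 2

/-- `dim_{so_m}(p) = m(m−1)/2 − ½(Σ_i ((p^t)_i)² − #{i : p_i odd})`,
the dimension of the nilpotent orbit of `so_m` attached to an orthogonal
partition `p` of `m`. -/
def dimSO (m : ℕ) (p : Multiset ℕ) : ℚ :=
  ((m : ℚ) * ((m : ℚ) - 1)) / 2 -
    (((transpose p).map (fun x => (x : ℚ) ^ 2)).sum - (p.countP (Odd ·) : ℚ)) / 2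

/-- The partition `p_1 = [⌊b_1/2⌋^{a_1} ⋯ ⌊b_r/2⌋^{a_r}]^t` attached to
`p = [b_1^{a_1} ⋯ b_r^{a_r}]` (zero entries discarded). -/
def pOne (p : Multiset ℕ) : Multiset ℕ := transpose (p.map (· / 2))

/-- `n* = ⌊(Σ_{i : b_i odd} a_i)/2⌋`, i.e. half the number of odd parts. -/
def nStar (p : Multiset ℕ) : ℕ := p.countP (Odd ·) / 2

/-- `[q q (m)]`: two copies of `q` together with one extra part `m`
(no extra part when `m = 0`). -/
def qqm (q : Multiset ℕ) (m : ℕ) : Multiset ℕ :=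
  if m = 0 then q + q else m ::ₘ (q + q)


namespace Pf

/-- number of parts of `p` that are `≥ m` -/
def dl (p : Multiset ℕ) (m : ℕ) : ℕ := p.countP (fun a => m ≤ a)

/-- `Tf p m = Σ_a min(a, m)`, the number of boxes in the first `m` columns. -/
def Tf (p : Multiset ℕ) (m : ℕ) : ℕ := ∑ u ∈ Finset.range m, dl p (u + 1)

lemma dl_anti (p : Multiset ℕ) {m m' : ℕ} (h : m ≤ m') : dl p m' ≤ dl p m := by
  rw [dl, dl, Multiset.countP_eq_card_filter, Multiset.countP_eq_card_filter]
  exact Multiset.card_le_card (Multiset.monotone_filter_right p (fun a ha => le_trans h ha))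

lemma dl_le_card (p : Multiset ℕ) (m : ℕ) : dl p m ≤ Multiset.card p :=
  Multiset.countP_le_card _ _

lemma mem_le_sum {p : Multiset ℕ} {a : ℕ} (h : a ∈ p) : a ≤ p.sum :=
  Multiset.le_sum_of_mem h

lemma dl_eq_zero {p : Multiset ℕ} {m : ℕ} (h : p.sum < m) : dl p m = 0 := by
  rw [dl, Multiset.countP_eq_zero]
  intro a ha hma
  exact absurd (le_trans hma (mem_le_sum ha)) (not_le.mpr h)

lemma card_le_sum {p : Multiset ℕ} (h : 0 ∉ p) : Multiset.card p ≤ p.sum := by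
  induction p using Multiset.induction with
  | empty => simp
  | cons a s ih =>
    simp only [Multiset.card_cons, Multiset.sum_cons]
    have ha : a ≠ 0 := fun e => h (e ▸ Multiset.mem_cons_self a s)
    have := ih (fun h0 => h (Multiset.mem_cons_of_mem h0))
    omega

lemma dl_le_sum {p : Multiset ℕ} (h : 0 ∉ p) (m : ℕ) : dl p m ≤ p.sum :=
  le_trans (dl_le_card p m) (card_le_sum h)

lemma sum_indicator_min (a m : ℕ) :
    (∑ u ∈ Finset.range m, if u + 1 ≤ a then 1 else 0) = min a m := by
  induction m with
  | zero => simp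
  | succ m ih =>
    rw [Finset.sum_range_succ, ih]
    rcases le_or_gt (m + 1) a with h | h
    · rw [if_pos h]; omega
    · rw [if_neg (by omega)]; omega

lemma dl_cons (a : ℕ) (p : Multiset ℕ) (m : ℕ) :
    dl (a ::ₘ p) m = dl p m + if m ≤ a then 1 else 0 := Multiset.countP_cons _ a p

lemma Tf_map_min (p : Multiset ℕ) (m : ℕ) :
    Tf p m = (p.map (fun a => min a m)).sum := by
  induction p using Multiset.induction with
  | empty => simp [Tf, dl]
  | cons a s ih =>
    rw [Multiset.map_cons, Multiset.sum_cons, ← ih, Tf, Tf]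
    simp only [dl_cons]
    rw [Finset.sum_add_distrib, sum_indicator_min]
    omega

lemma Tf_zero (p : Multiset ℕ) : Tf p 0 = 0 := by simp [Tf]

lemma Tf_succ (p : Multiset ℕ) (m : ℕ) : Tf p (m + 1) = Tf p m + dl p (m + 1) := by
  rw [Tf, Tf, Finset.sum_range_succ]

lemma Tf_mono (p : Multiset ℕ) {m m' : ℕ} (h : m ≤ m') : Tf p m ≤ Tf p m' := by
  rw [Tf_map_min, Tf_map_min]
  apply Multiset.sum_map_le_sum_map
  intro a _
  exact min_le_min le_rfl h

lemma Tf_le_sum (p : Multiset ℕ) (m : ℕ) : Tf p m ≤ p.sum := by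
  rw [Tf_map_min]
  calc (p.map (fun a => min a m)).sum ≤ (p.map id).sum :=
        Multiset.sum_map_le_sum_map _ _ (fun a _ => min_le_left a m)
    _ = p.sum := by rw [Multiset.map_id]

lemma Tf_stab' {p : Multiset ℕ} {m : ℕ} (h : ∀ a ∈ p, a ≤ m) : Tf p m = p.sum := by
  rw [Tf_map_min]
  have : p.map (fun a => min a m) = p.map id := Multiset.map_congr rfl (fun a ha => by
    simp [min_eq_left (h a ha)])
  rw [this, Multiset.map_id]

lemma Tf_stab {p : Multiset ℕ} {m : ℕ} (h : p.sum ≤ m) : Tf p m = p.sum :=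
  Tf_stab' (fun a ha => le_trans (mem_le_sum ha) h)

lemma Tf_concave (p : Multiset ℕ) (m : ℕ) :
    Tf p (m + 2) + Tf p m ≤ Tf p (m + 1) + Tf p (m + 1) := by
  rw [Tf_succ, Tf_succ]
  have h2 : dl p (m + 1 + 1) ≤ dl p (m + 1) := dl_anti p (by omega)
  omega

lemma sum_eq_sum_dl (p : Multiset ℕ) : p.sum = ∑ j ∈ Finset.range p.sum, dl p (j + 1) :=
  (Tf_stab le_rfl).symm

/-! ### psum -/

lemma psum_def' (p : Multiset ℕ) (k : ℕ) :
    psum p k = ∑ j ∈ Finset.range p.sum, min k (dl p (j + 1)) := rfl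

lemma psum_zero (p : Multiset ℕ) : psum p 0 = 0 := by simp [psum_def']

/-- L1: fundamental inequality `psum p k + Tf p m ≤ k m + |p|`. -/
lemma psum_L1 (p : Multiset ℕ) (k m : ℕ) : psum p k + Tf p m ≤ k * m + p.sum := by
  have hsum : p.sum = ∑ j ∈ Finset.range p.sum, dl p (j + 1) := sum_eq_sum_dl p
  rcases le_or_gt m p.sum with hm | hm
  · rw [psum_def']
    rw [← Finset.sum_range_add_sum_Ico _ hm] at hsum ⊢
    have h1 : ∑ j ∈ Finset.range m, min k (dl p (j + 1)) ≤ k * m := by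
      calc ∑ j ∈ Finset.range m, min k (dl p (j + 1)) ≤ ∑ _j ∈ Finset.range m, k :=
            Finset.sum_le_sum (fun j _ => min_le_left _ _)
        _ = k * m := by rw [Finset.sum_const, Finset.card_range]; ring
    have h2 : ∑ j ∈ Finset.Ico m p.sum, min k (dl p (j + 1)) ≤
        ∑ j ∈ Finset.Ico m p.sum, dl p (j + 1) :=
      Finset.sum_le_sum (fun j _ => min_le_right _ _)
    have h3 : Tf p m = ∑ j ∈ Finset.range m, dl p (j + 1) := rfl
    omega
  · have h1 : Tf p m = p.sum := Tf_stab hm.le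
    have hps : psum p k ≤ p.sum := by
      rw [psum_def']
      conv_rhs => rw [hsum]
      exact Finset.sum_le_sum (fun j _ => min_le_right _ _)
    have h2 : psum p k ≤ k * m := by
      rcases Nat.eq_zero_or_pos k with rfl | hk
      · have : psum p 0 = 0 := psum_zero p
        omega
      · calc psum p k ≤ p.sum := hps
          _ ≤ m := hm.le
          _ ≤ k * m := Nat.le_mul_of_pos_left m hk
    omega

lemma psum_le_sum (p : Multiset ℕ) (k : ℕ) : psum p k ≤ p.sum := by
  rw [psum_def']
  conv_rhs => rw [sum_eq_sum_dl p]
  exact Finset.sum_le_sum (fun j _ => min_le_right _ _)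

/-- L5: attainment `psum p (dl p (m+1)) + Tf p m = (dl p (m+1)) * m + |p|`. -/
lemma psum_L5 (p : Multiset ℕ) (m : ℕ) :
    psum p (dl p (m + 1)) + Tf p m = (dl p (m + 1)) * m + p.sum := by
  set j := dl p (m + 1) with hj
  have hsum : p.sum = ∑ i ∈ Finset.range p.sum, dl p (i + 1) := sum_eq_sum_dl p
  rcases le_or_gt m p.sum with hm | hm
  · rw [psum_def']
    rw [← Finset.sum_range_add_sum_Ico _ hm] at hsum ⊢
    have h1 : ∀ i ∈ Finset.range m, min j (dl p (i + 1)) = j := by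
      intro i hi
      have : i + 1 ≤ m + 1 := by
        have := Finset.mem_range.mp hi; omega
      exact min_eq_left (hj ▸ dl_anti p this)
    have h2 : ∀ i ∈ Finset.Ico m p.sum, min j (dl p (i + 1)) = dl p (i + 1) := by
      intro i hi
      have : m + 1 ≤ i + 1 := by
        have := (Finset.mem_Ico.mp hi).1; omega
      exact min_eq_right (hj ▸ dl_anti p this)
    rw [Finset.sum_congr rfl h1, Finset.sum_congr rfl h2, Finset.sum_const, Finset.card_range,
      smul_eq_mul]
    have h3 : Tf p m = ∑ i ∈ Finset.range m, dl p (i + 1) := rfl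
    have h4 : m * j = j * m := Nat.mul_comm m j
    omega
  · have h0 : j = 0 := hj ▸ dl_eq_zero (by omega)
    rw [h0, Nat.zero_mul, Nat.zero_add]
    have := Tf_stab hm.le
    have : psum p 0 = 0 := psum_zero p
    omega



/-! ### transpose -/

lemma countP_eq_sum_ite (P : ℕ → Prop) [DecidablePred P] (s : Multiset ℕ) :
    Multiset.countP P s = (s.map (fun a => if P a then 1 else 0)).sum := by
  induction s using Multiset.induction with
  | empty => simp
  | cons a s ih => rw [Multiset.countP_cons, Multiset.map_cons, Multiset.sum_cons, ih]; omega

lemma countP_range (P : ℕ → Prop) [DecidablePred P] (N : ℕ) :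
    Multiset.countP P (Multiset.range N) = ∑ j ∈ Finset.range N, if P j then 1 else 0 := by
  rw [countP_eq_sum_ite]; rfl

lemma sum_filter_pos (s : Multiset ℕ) : (Multiset.filter (0 < ·) s).sum = s.sum := by
  induction s using Multiset.induction with
  | empty => simp
  | cons a s ih =>
    rw [Multiset.filter_cons, Multiset.sum_cons]
    rcases Nat.eq_zero_or_pos a with rfl | ha
    · simpa using ih
    · rw [if_pos ha]; simp [ih]

lemma countP_filter_pos (P : ℕ → Prop) [DecidablePred P] (h : ∀ a, P a → 0 < a)
    (s : Multiset ℕ) : Multiset.countP P (Multiset.filter (0 < ·) s) = Multiset.countP P s := by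
  rw [Multiset.countP_filter]
  apply Multiset.countP_congr rfl
  intro a _
  exact propext ⟨fun h' => h'.1, fun h' => ⟨h', h a h'⟩⟩

lemma transpose_def (p : Multiset ℕ) :
    transpose p = Multiset.filter (0 < ·) ((Multiset.range p.sum).map (fun j => dl p (j + 1))) :=
  rfl

lemma transpose_sum (p : Multiset ℕ) : (transpose p).sum = p.sum := by
  rw [transpose_def, sum_filter_pos]
  have : ((Multiset.range p.sum).map (fun j => dl p (j + 1))).sum
      = ∑ j ∈ Finset.range p.sum, dl p (j + 1) := rfl
  rw [this, ← sum_eq_sum_dl]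

lemma zero_notin_transpose (p : Multiset ℕ) : 0 ∉ transpose p := by
  rw [transpose_def]
  intro h
  have := Multiset.of_mem_filter h
  omega

lemma dl_transpose (p : Multiset ℕ) {i : ℕ} (hi : 1 ≤ i) :
    dl (transpose p) i = Multiset.countP (fun j => i ≤ dl p (j + 1)) (Multiset.range p.sum) := by
  rw [dl, transpose_def, countP_filter_pos _ (fun a ha => by omega),
    Multiset.countP_map, ← Multiset.countP_eq_card_filter]

lemma psum_eq_Tf_transpose (p : Multiset ℕ) (k : ℕ) : psum p k = Tf (transpose p) k := by
  rw [psum_def', Tf]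
  have h1 : ∀ u, dl (transpose p) (u + 1)
      = ∑ j ∈ Finset.range p.sum, if u + 1 ≤ dl p (j + 1) then 1 else 0 := by
    intro u
    rw [dl_transpose p (by omega), countP_range]
  rw [Finset.sum_congr rfl (fun u _ => h1 u), Finset.sum_comm]
  apply Finset.sum_congr rfl
  intro j _
  rw [sum_indicator_min]
  exact (min_comm _ _)

/-- counting a downward-closed predicate on `range N` -/
lemma seg_count {P : ℕ → Prop} [DecidablePred P] (hP : ∀ u v, u ≤ v → P v → P u)
    {N i : ℕ} :
    i + 1 ≤ Multiset.countP P (Multiset.range N) ↔ (i < N ∧ P i) := by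
  rw [countP_range]
  constructor
  · intro h
    by_contra hc
    have hbound : ∀ j ∈ Finset.range N, (if P j then 1 else 0) ≤ if j < i then 1 else 0 := by
      intro j hj
      split_ifs with h1 h2
      · omega
      · exfalso
        rcases Nat.lt_or_ge i N with hiN | hiN
        · exact hc ⟨hiN, hP i j (by omega) h1⟩
        · exact absurd (Finset.mem_range.mp hj) (by omega)
      · omega
      · omega
    have h2 : ∑ j ∈ Finset.range N, (if P j then 1 else 0) ≤
        ∑ j ∈ Finset.range N, (if j < i then 1 else 0) := Finset.sum_le_sum hbound
    have h3 : ∑ j ∈ Finset.range N, (if j < i then 1 else 0) ≤ i := by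
      have := sum_indicator_min i N  -- ∑_{u<N} [u+1 ≤ i] = min i N
      have heq : ∀ j, (if j < i then 1 else 0) = (if j + 1 ≤ i then (1:ℕ) else 0) := by
        intro j; split_ifs <;> omega
      calc ∑ j ∈ Finset.range N, (if j < i then 1 else 0)
          = ∑ j ∈ Finset.range N, (if j + 1 ≤ i then 1 else 0) := by
            exact Finset.sum_congr rfl (fun j _ => heq j)
        _ = min i N := sum_indicator_min i N
        _ ≤ i := min_le_left _ _
    omega
  · rintro ⟨hiN, hPi⟩
    have hsub : ∑ j ∈ Finset.range (i + 1), (if P j then (1:ℕ) else 0) ≤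
        ∑ j ∈ Finset.range N, (if P j then 1 else 0) :=
      Finset.sum_le_sum_of_subset (Finset.range_subset_range.mpr (by omega))
    have hall : ∀ j ∈ Finset.range (i + 1), (if P j then (1:ℕ) else 0) = 1 := by
      intro j hj
      rw [if_pos (hP j i (by have := Finset.mem_range.mp hj; omega) hPi)]
    rw [Finset.sum_congr rfl hall, Finset.sum_const, Finset.card_range, smul_eq_mul,
      mul_one] at hsub
    omega

lemma dl_transpose_iff (p : Multiset ℕ) (i j : ℕ) :
    j + 1 ≤ dl (transpose p) (i + 1) ↔ i + 1 ≤ dl p (j + 1) := by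
  rw [dl_transpose p (by omega)]
  have hseg := seg_count (P := fun u => i + 1 ≤ dl p (u + 1))
    (fun u v huv hv => le_trans hv (dl_anti p (by omega))) (N := p.sum) (i := j)
  rw [hseg]
  constructor
  · exact fun h => h.2
  · intro h
    refine ⟨?_, h⟩
    have h1 : 1 ≤ dl p (j + 1) := by omega
    have h2 := seg_count (P := fun u => 1 ≤ dl p (u + 1))
      (fun u v huv hv => le_trans hv (dl_anti p (by omega))) (N := p.sum) (i := j)
    -- need j < p.sum from dl p (j+1) ≥ 1
    have : ∃ a ∈ p, j + 1 ≤ a := by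
      by_contra hc
      push_neg at hc
      have : dl p (j + 1) = 0 := Multiset.countP_eq_zero.mpr (fun a ha => by
        have := hc a ha; omega)
      omega
    obtain ⟨a, ha, hja⟩ := this
    have := mem_le_sum ha
    omega

lemma countP_range_le (c N : ℕ) :
    Multiset.countP (fun j => j + 1 ≤ c) (Multiset.range N) = min c N := by
  rw [countP_range, sum_indicator_min]

lemma dl_dl {p : Multiset ℕ} (hp : 0 ∉ p) {m : ℕ} (hm : 1 ≤ m) :
    dl (transpose (transpose p)) m = dl p m := by
  obtain ⟨i, rfl⟩ : ∃ i, m = i + 1 := ⟨m - 1, by omega⟩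
  rw [dl_transpose _ (by omega), transpose_sum]
  have h1 : ∀ j, (i + 1 ≤ dl (transpose p) (j + 1)) ↔ (j + 1 ≤ dl p (i + 1)) := by
    intro j
    rw [dl_transpose_iff]
  rw [Multiset.countP_congr rfl (fun j _ => propext (h1 j)), countP_range_le]
  exact min_eq_left (le_trans (dl_le_card p _) (card_le_sum hp))

lemma dl_add_count (p : Multiset ℕ) (a : ℕ) :
    dl p a = dl p (a + 1) + p.count a := by
  induction p using Multiset.induction with
  | empty => simp [dl]
  | cons b s ih =>
    rw [dl_cons, dl_cons, Multiset.count_cons]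
    split_ifs <;> omega

lemma eq_of_dl_eq {p q : Multiset ℕ} (hp : 0 ∉ p) (hq : 0 ∉ q)
    (h : ∀ m, 1 ≤ m → dl p m = dl q m) : p = q := by
  ext a
  rcases Nat.eq_zero_or_pos a with rfl | ha
  · rw [Multiset.count_eq_zero_of_notMem hp, Multiset.count_eq_zero_of_notMem hq]
  · have h1 := dl_add_count p a
    have h2 := dl_add_count q a
    have h3 := h a ha
    have h4 := h (a + 1) (by omega)
    omega

lemma transpose_transpose {p : Multiset ℕ} (hp : 0 ∉ p) : transpose (transpose p) = p :=
  eq_of_dl_eq (zero_notin_transpose _) hp (fun m hm => dl_dl hp hm)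

lemma Tf_transpose_transpose {p : Multiset ℕ} (hp : 0 ∉ p) (m : ℕ) :
    Tf (transpose (transpose p)) m = Tf p m := by
  rw [transpose_transpose hp]

lemma psum_transpose {p : Multiset ℕ} (hp : 0 ∉ p) (k : ℕ) :
    psum (transpose p) k = Tf p k := by
  rw [psum_eq_Tf_transpose, Tf_transpose_transpose hp]

lemma transpose_partition {N : ℕ} {p : Multiset ℕ} (hp : IsPartitionOf N p) :
    IsPartitionOf N (transpose p) :=
  ⟨by rw [transpose_sum]; exact hp.1, zero_notin_transpose p⟩


/-! ### dominance order -/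

lemma psum_L5' {p : Multiset ℕ} (hp : 0 ∉ p) (k : ℕ) :
    psum p k + Tf p (dl (transpose p) (k + 1)) = k * (dl (transpose p) (k + 1)) + p.sum := by
  have h := psum_L5 (transpose p) k
  rw [psum_transpose hp, ← psum_eq_Tf_transpose p k, transpose_sum] at h
  have hc : dl (transpose p) (k + 1) * k = k * dl (transpose p) (k + 1) := Nat.mul_comm _ _
  omega

lemma Tf_le_of_dom {p q : Multiset ℕ} (hsum : p.sum = q.sum) (h : DomLE q p) (m : ℕ) :
    Tf p m ≤ Tf q m := by
  set j := dl q (m + 1) with hj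
  have h5 := psum_L5 q m
  rw [← hj] at h5
  have h1 := psum_L1 p j m
  have h2 := h j
  omega

lemma dom_of_Tf_le {p q : Multiset ℕ} (hp : 0 ∉ p) (hsum : p.sum = q.sum)
    (h : ∀ m, Tf p m ≤ Tf q m) : DomLE q p := by
  intro k
  set m := dl (transpose p) (k + 1) with hm
  have h5 := psum_L5' hp k
  rw [← hm] at h5
  have h1 := psum_L1 q k m
  have h2 := h m
  omega

lemma dom_refl (p : Multiset ℕ) : DomLE p p := fun _ => le_rfl

lemma dom_trans {p q r : Multiset ℕ} (h1 : DomLE p q) (h2 : DomLE q r) : DomLE p r :=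
  fun k => le_trans (h1 k) (h2 k)

lemma dom_antisymm {p q : Multiset ℕ} (hp : 0 ∉ p) (hq : 0 ∉ q) (hsum : p.sum = q.sum)
    (h1 : DomLE p q) (h2 : DomLE q p) : p = q := by
  have hTf : ∀ m, Tf p m = Tf q m := fun m =>
    le_antisymm (Tf_le_of_dom hsum h2 m) (Tf_le_of_dom hsum.symm h1 m)
  apply eq_of_dl_eq hp hq
  intro m hm
  obtain ⟨i, rfl⟩ : ∃ i, m = i + 1 := ⟨m - 1, by omega⟩
  have e1 := Tf_succ p i
  have e2 := Tf_succ q i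
  have := hTf i
  have := hTf (i + 1)
  omega

/-! ### parity -/

lemma countP_toFinset (P : ℕ → Prop) [DecidablePred P] (s : Multiset ℕ) :
    Multiset.countP P s = ∑ v ∈ s.toFinset, if P v then s.count v else 0 := by
  rw [Multiset.countP_eq_card_filter]
  rw [← Multiset.toFinset_sum_count_eq (Multiset.filter P s)]
  have h1 : ∀ v ∈ (Multiset.filter P s).toFinset,
      Multiset.count v (Multiset.filter P s) = if P v then s.count v else 0 := by
    intro v _
    rw [Multiset.count_filter]
  rw [Finset.sum_congr rfl h1]
  apply Finset.sum_subset (Multiset.toFinset_subset.mpr (Multiset.filter_subset P s))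
  intro v hvs hv
  split_ifs with hPv
  · by_contra hne
    apply hv
    rw [Multiset.mem_toFinset, Multiset.mem_filter]
    refine ⟨?_, hPv⟩
    rw [← Multiset.count_pos]
    omega
  · rfl

lemma even_sum_finset {F : Finset ℕ} {f : ℕ → ℕ} (h : ∀ v ∈ F, Even (f v)) :
    Even (∑ v ∈ F, f v) :=
  Finset.sum_induction f Even (fun _ _ ha hb => ha.add hb) Even.zero h

lemma Tf_add_rest (p : Multiset ℕ) (m : ℕ) :
    Tf p m + (p.map (fun a => a - m)).sum = p.sum := by
  rw [Tf_map_min]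
  have : p.sum = (p.map (fun a => min a m + (a - m))).sum := by
    conv_lhs => rw [← Multiset.map_id p]
    apply congrArg
    apply Multiset.map_congr rfl
    intro a _
    simp only [id]
    omega
  rw [this, Multiset.sum_map_add]

lemma sum_map_mod_congr {p : Multiset ℕ} {f g : ℕ → ℕ} (h : ∀ a ∈ p, f a % 2 = g a % 2) :
    (p.map f).sum % 2 = (p.map g).sum % 2 := by
  induction p using Multiset.induction with
  | empty => simp
  | cons a s ih =>
    simp only [Multiset.map_cons, Multiset.sum_cons]
    have h1 := h a (Multiset.mem_cons_self a s)
    have h2 := ih (fun b hb => h b (Multiset.mem_cons_of_mem hb))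
    omega

lemma rest_parity (p : Multiset ℕ) {m : ℕ} (hm : Odd m) :
    (p.map (fun a => a - m)).sum % 2 = (Multiset.countP (fun a => m < a ∧ Even a) p) % 2 := by
  rw [countP_eq_sum_ite]
  apply sum_map_mod_congr
  intro a _
  have hm' := Nat.odd_iff.mp hm
  rcases Nat.even_or_odd a with ha | ha
  · have ha' := Nat.even_iff.mp ha
    by_cases hlt : m < a
    · rw [if_pos ⟨hlt, ha⟩]; omega
    · rw [if_neg (fun hc => hlt hc.1)]; omega
  · have ha' := Nat.odd_iff.mp ha
    rw [if_neg (fun hc => by have := Nat.even_iff.mp hc.2; omega)]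
    omega

lemma orth_Tf_parity {p : Multiset ℕ} (hp : IsOrthogonal p) {m : ℕ} (hm : Odd m) :
    Tf p m % 2 = p.sum % 2 := by
  have h1 := Tf_add_rest p m
  have h2 := rest_parity p hm
  have h3 : Even (Multiset.countP (fun a => m < a ∧ Even a) p) := by
    rw [countP_toFinset]
    apply even_sum_finset
    intro v _
    split_ifs with h'
    · exact hp v h'.2
    · exact Even.zero
  rw [Nat.even_iff] at h3
  omega

lemma cnt_split (p : Multiset ℕ) {a : ℕ} (ha : Even a) (ha2 : 2 ≤ a) :
    Multiset.countP (fun x => a - 1 < x ∧ Even x) p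
      = Multiset.countP (fun x => a + 1 < x ∧ Even x) p + p.count a := by
  induction p using Multiset.induction with
  | empty => simp
  | cons b s ih =>
    rw [Multiset.countP_cons, Multiset.countP_cons, Multiset.count_cons, ih]
    rw [Nat.even_iff] at ha
    have hb := Nat.even_or_odd b
    rcases hb with hb | hb
    · rw [Nat.even_iff] at hb
      split_ifs <;> simp_all [Nat.even_iff] <;> omega
    · rw [Nat.odd_iff] at hb
      split_ifs <;> simp_all [Nat.even_iff] <;> omega

lemma orth_of_Tf_parity {p : Multiset ℕ} (hp : 0 ∉ p)
    (h : ∀ m, Odd m → Tf p m % 2 = p.sum % 2) : IsOrthogonal p := by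
  intro a ha
  rcases Nat.eq_zero_or_pos a with rfl | hpos
  · rw [Multiset.count_eq_zero_of_notMem hp]
    exact Even.zero
  have ha2 : 2 ≤ a := by
    rw [Nat.even_iff] at ha; omega
  have hcnt : ∀ m, Odd m → Even (Multiset.countP (fun x => m < x ∧ Even x) p) := by
    intro m hm
    have h1 := Tf_add_rest p m
    have h2 := rest_parity p hm
    have h3 := h m hm
    rw [Nat.even_iff]
    omega
  have e1 := hcnt (a - 1) (by rw [Nat.even_iff] at ha; rw [Nat.odd_iff]; omega)
  have e2 := hcnt (a + 1) (by rw [Nat.even_iff] at ha; rw [Nat.odd_iff]; omega)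
  have := cnt_split p ha ha2
  rw [Nat.even_iff] at e1 e2 ⊢
  omega

lemma sum_mod_two (s : Multiset ℕ) :
    s.sum % 2 = (Multiset.countP (fun a => Odd a) s) % 2 := by
  induction s using Multiset.induction with
  | empty => simp
  | cons a t ih =>
    rw [Multiset.sum_cons, Multiset.countP_cons]
    rcases Nat.even_or_odd a with ha | ha
    · rw [if_neg (by simpa using ha)]
      rw [Nat.even_iff] at ha
      omega
    · rw [if_pos ha]
      rw [Nat.odd_iff] at ha
      omega

lemma symp_filter_even {p : Multiset ℕ} (hp : IsSymplectic p) (c : ℕ) :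
    (Multiset.filter (fun a => c ≤ a) p).sum % 2 = 0 := by
  rw [sum_mod_two]
  rw [Multiset.countP_filter]
  have h3 : Even (Multiset.countP (fun a => Odd a ∧ c ≤ a) p) := by
    rw [countP_toFinset]
    apply even_sum_finset
    intro v _
    split_ifs with h'
    · exact hp v h'.1
    · exact Even.zero
  rw [Nat.even_iff] at h3
  omega

lemma symp_countP_odd {p : Multiset ℕ} (hp : IsSymplectic p) :
    Even (Multiset.countP (fun a => Odd a) p) := by
  rw [countP_toFinset]
  apply even_sum_finset
  intro v _
  split_ifs with h'
  · exact hp v h'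
  · exact Even.zero


/-! ### realization of a concave profile as a partition -/

def realize (d : ℕ → ℕ) (B : ℕ) : Multiset ℕ :=
  (Multiset.range B).bind (fun v => Multiset.replicate (d (v + 1) - d (v + 2)) (v + 1))

lemma realize_zero_notin (d : ℕ → ℕ) (B : ℕ) : 0 ∉ realize d B := by
  intro h
  rw [realize, Multiset.mem_bind] at h
  obtain ⟨v, _, hv⟩ := h
  have := Multiset.eq_of_mem_replicate hv
  omega

lemma realize_mem_le (d : ℕ → ℕ) (B : ℕ) {a : ℕ} (h : a ∈ realize d B) : a ≤ B := by
  rw [realize, Multiset.mem_bind] at h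
  obtain ⟨v, hv, hva⟩ := h
  have := Multiset.eq_of_mem_replicate hva
  have := Multiset.mem_range.mp hv
  omega

lemma countP_replicate' (P : ℕ → Prop) [DecidablePred P] (n a : ℕ) :
    Multiset.countP P (Multiset.replicate n a) = if P a then n else 0 := by
  induction n with
  | zero => simp
  | succ n ih =>
    rw [Multiset.replicate_succ, Multiset.countP_cons, ih]
    split_ifs <;> omega

lemma chain_anti {d : ℕ → ℕ} (hanti : ∀ u, d (u + 2) ≤ d (u + 1)) :
    ∀ i j, 1 ≤ i → i ≤ j → d j ≤ d i := by
  have key : ∀ i, 1 ≤ i → ∀ t, d (i + t) ≤ d i := by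
    intro i hi t
    induction t with
    | zero => simp
    | succ t ih =>
      have h2 : d (i + t + 1) ≤ d (i + t) := by
        obtain ⟨u, hu⟩ : ∃ u, i + t = u + 1 := ⟨i + t - 1, by omega⟩
        rw [show i + t + 1 = u + 2 by omega, hu]
        exact hanti u
      have : i + (t + 1) = i + t + 1 := by omega
      rw [this]
      omega
  intro i j hi hij
  have := key i hi (j - i)
  rw [show i + (j - i) = j by omega] at this
  exact this

lemma realize_dl {d : ℕ → ℕ} (hanti : ∀ u, d (u + 2) ≤ d (u + 1)) (B : ℕ)
    {u : ℕ} (hu : 1 ≤ u) : dl (realize d B) u = d u - d (B + 1) := by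
  induction B with
  | zero =>
    have h0 : realize d 0 = 0 := by simp [realize]
    rw [h0]
    have h3 : d u ≤ d 1 := chain_anti hanti 1 u le_rfl hu
    simp [dl]
    omega
  | succ B ih =>
    have hstep : realize d (B + 1)
        = Multiset.replicate (d (B + 1) - d (B + 2)) (B + 1) + realize d B := by
      rw [realize, realize, Multiset.range_succ, Multiset.cons_bind]
    rw [hstep, dl, Multiset.countP_add, ← dl, ← dl, ih]
    have hrep : dl (Multiset.replicate (d (B + 1) - d (B + 2)) (B + 1)) u
        = if u ≤ B + 1 then d (B + 1) - d (B + 2) else 0 := by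
      rw [dl, countP_replicate']
    rw [hrep]
    have hBB : d (B + 1 + 1) = d (B + 2) := rfl
    split_ifs with h1
    · have h2 : d (B + 1) ≤ d u := chain_anti hanti u (B + 1) hu h1
      have h3 : d (B + 2) ≤ d (B + 1) := hanti B
      omega
    · have h2 : d u ≤ d (B + 2) := chain_anti hanti (B + 2) u (by omega) (by omega)
      have h3 : d (B + 2) ≤ d (B + 1) := hanti B
      omega

lemma realize_Tf {d : ℕ → ℕ} (hanti : ∀ u, d (u + 2) ≤ d (u + 1)) {B : ℕ}
    (hB : d (B + 1) = 0) (m : ℕ) :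
    Tf (realize d B) m = ∑ u ∈ Finset.range m, d (u + 1) := by
  rw [Tf]
  apply Finset.sum_congr rfl
  intro u _
  rw [realize_dl hanti B (by omega), hB, Nat.sub_zero]

lemma realize_sum {d : ℕ → ℕ} (hanti : ∀ u, d (u + 2) ≤ d (u + 1)) {B : ℕ}
    (hB : d (B + 1) = 0) :
    (realize d B).sum = ∑ u ∈ Finset.range B, d (u + 1) := by
  rw [← Tf_stab' (fun a ha => realize_mem_le d B ha), realize_Tf hanti hB]

/-! ### existence of the orthogonal collapse -/

def ones (N : ℕ) : Multiset ℕ := Multiset.replicate N 1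

lemma ones_partition (N : ℕ) : IsPartitionOf N (ones N) := by
  constructor
  · rw [ones, Multiset.sum_replicate, smul_eq_mul, mul_one]
  · intro h
    have := Multiset.eq_of_mem_replicate h
    omega

lemma ones_orth (N : ℕ) : IsOrthogonal (ones N) := by
  intro a ha
  rw [ones, Multiset.count_replicate]
  split_ifs with h
  · exfalso
    rw [← h] at ha
    exact (Nat.not_even_iff_odd.mpr odd_one) ha
  · exact Even.zero

lemma ones_Tf (N : ℕ) {m : ℕ} (hm : 1 ≤ m) : Tf (ones N) m = N := by
  rw [Tf_map_min, ones, Multiset.map_replicate, Multiset.sum_replicate]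
  rw [min_eq_left hm, smul_eq_mul, mul_one]

lemma ones_dom {N : ℕ} {y : Multiset ℕ} (hy : IsPartitionOf N y) : DomLE (ones N) y := by
  apply dom_of_Tf_le hy.2 (by rw [hy.1, (ones_partition N).1])
  intro m
  rcases Nat.eq_zero_or_pos m with rfl | hm
  · rw [Tf_zero, Tf_zero]
  · rw [ones_Tf N hm, ← hy.1]
    exact Tf_le_sum y m

theorem exists_orthCollapse {N : ℕ} {y : Multiset ℕ} (hy : IsPartitionOf N y) :
    ∃ c, IsCollapseOf IsOrthogonal N y c := by
  classical
  set pred : Multiset ℕ → Prop :=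
    fun q => IsPartitionOf N q ∧ IsOrthogonal q ∧ DomLE q y with hpred
  set Qs : ℕ → Set ℕ := fun m => {t | ∃ q, pred q ∧ Tf q m = t} with hQs
  have hq0 : pred (ones N) := ⟨ones_partition N, ones_orth N, ones_dom hy⟩
  have hne : ∀ m, (Qs m).Nonempty := fun m => ⟨Tf (ones N) m, ones N, hq0, rfl⟩
  set f : ℕ → ℕ := fun m => sInf (Qs m) with hf
  have hmem : ∀ m, ∃ q, pred q ∧ Tf q m = f m := fun m => Nat.sInf_mem (hne m)
  have hle : ∀ q, pred q → ∀ m, f m ≤ Tf q m :=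
    fun q hq m => Nat.sInf_le ⟨q, hq, rfl⟩
  have f0 : f 0 = 0 := by
    have := hle (ones N) hq0 0
    rw [Tf_zero] at this
    omega
  have fmono : ∀ m, f m ≤ f (m + 1) := by
    intro m
    obtain ⟨q, hq, hqm⟩ := hmem (m + 1)
    calc f m ≤ Tf q m := hle q hq m
      _ ≤ Tf q (m + 1) := Tf_mono q (by omega)
      _ = f (m + 1) := hqm
  have fconc : ∀ m, f (m + 2) + f m ≤ f (m + 1) + f (m + 1) := by
    intro m
    obtain ⟨q, hq, hqm⟩ := hmem (m + 1)
    have h1 := hle q hq m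
    have h2 := hle q hq (m + 2)
    have h3 := Tf_concave q m
    omega
  have fN : ∀ m, N ≤ m → f m = N := by
    intro m hm
    obtain ⟨q, hq, hqm⟩ := hmem m
    have : Tf q m = N := by
      rw [Tf_stab (by rw [hq.1.1]; omega), hq.1.1]
    omega
  set dC : ℕ → ℕ := fun u => f u - f (u - 1) with hdC
  have hanti : ∀ u, dC (u + 2) ≤ dC (u + 1) := by
    intro u
    have h1 := fconc u
    have h2 := fmono u
    have h3 := fmono (u + 1)
    simp only [hdC, Nat.add_sub_cancel]
    have e1 : f (u + 1 + 1) = f (u + 2) := rfl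
    have e2 : f (u + 2 - 1) = f (u + 1) := rfl
    omega
  have hB : dC (N + 1) = 0 := by
    simp only [hdC, Nat.add_sub_cancel]
    rw [fN (N + 1) (by omega), fN N le_rfl]
    omega
  set c : Multiset ℕ := realize dC N with hc
  have hTfc : ∀ m, Tf c m = f m := by
    intro m
    rw [hc, realize_Tf hanti hB]
    induction m with
    | zero => simp [f0]
    | succ m ih =>
      rw [Finset.sum_range_succ, ih]
      simp only [hdC, Nat.add_sub_cancel]
      have := fmono m
      omega
  have hcsum : c.sum = N := by
    have h1 : Tf c N = f N := hTfc N
    rw [Tf_stab' (fun a ha => realize_mem_le dC N ha)] at h1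
    rw [h1, fN N le_rfl]
  have hcpart : IsPartitionOf N c := ⟨hcsum, realize_zero_notin dC N⟩
  have hcorth : IsOrthogonal c := by
    apply orth_of_Tf_parity hcpart.2
    intro m hm
    obtain ⟨q, hq, hqm⟩ := hmem m
    rw [hTfc m, ← hqm, hcsum, ← hq.1.1]
    exact orth_Tf_parity hq.2.1 hm
  have hcdom : DomLE c y := by
    apply dom_of_Tf_le hy.2 (by rw [hy.1, hcsum])
    intro m
    obtain ⟨q, hq, hqm⟩ := hmem m
    rw [hTfc m, ← hqm]
    exact Tf_le_of_dom (by rw [hy.1, hq.1.1]) hq.2.2 m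
  refine ⟨c, hcpart, hcorth, hcdom, ?_⟩
  intro q' hq'p hq'o hq'd
  apply dom_of_Tf_le hcpart.2 (by rw [hcsum, hq'p.1])
  intro m
  rw [hTfc m]
  exact hle q' ⟨hq'p, hq'o, hq'd⟩ m


/-! ### the collapse and the duality operator -/

lemma orthCollapse_spec {N : ℕ} {y : Multiset ℕ} (hy : IsPartitionOf N y) :
    IsCollapseOf IsOrthogonal N y (orthCollapse N y) := by
  have hex := exists_orthCollapse hy
  rw [orthCollapse, collapseOf, dif_pos hex]
  exact hex.choose_spec

noncomputable def dOp (N : ℕ) (y : Multiset ℕ) : Multiset ℕ := orthCollapse N (transpose y)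

section DOp

variable {N : ℕ}

lemma dOp_spec {y : Multiset ℕ} (hy : IsPartitionOf N y) :
    IsCollapseOf IsOrthogonal N (transpose y) (dOp N y) :=
  orthCollapse_spec (transpose_partition hy)

lemma dOp_part {y : Multiset ℕ} (hy : IsPartitionOf N y) : IsPartitionOf N (dOp N y) :=
  (dOp_spec hy).1

lemma dOp_orth {y : Multiset ℕ} (hy : IsPartitionOf N y) : IsOrthogonal (dOp N y) :=
  (dOp_spec hy).2.1

lemma dom_transpose_antitone {p q : Multiset ℕ} (hp : 0 ∉ p) (hq : 0 ∉ q)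
    (hsum : p.sum = q.sum) (h : DomLE p q) : DomLE (transpose q) (transpose p) := by
  intro k
  rw [psum_transpose hq k, psum_transpose hp k]
  exact Tf_le_of_dom hsum.symm h k

lemma dOp_antitone {p q : Multiset ℕ} (hp : IsPartitionOf N p) (hq : IsPartitionOf N q)
    (h : DomLE p q) : DomLE (dOp N q) (dOp N p) := by
  have h1 : DomLE (transpose q) (transpose p) :=
    dom_transpose_antitone hp.2 hq.2 (by rw [hp.1, hq.1]) h
  have h2 : DomLE (dOp N q) (transpose p) :=
    dom_trans (dOp_spec hq).2.2.1 h1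
  exact (dOp_spec hp).2.2.2 (dOp N q) (dOp_part hq) (dOp_orth hq) h2

lemma orth_le_d2 {y : Multiset ℕ} (hy : IsPartitionOf N y) (hyo : IsOrthogonal y) :
    DomLE y (dOp N (dOp N y)) := by
  have h1 : DomLE (dOp N y) (transpose y) := (dOp_spec hy).2.2.1
  have h2 : DomLE (transpose (transpose y)) (transpose (dOp N y)) :=
    dom_transpose_antitone (dOp_part hy).2 (zero_notin_transpose y)
      (by rw [(dOp_part hy).1, (transpose_partition hy).1]) h1
  rw [transpose_transpose hy.2] at h2
  exact (dOp_spec (dOp_part hy)).2.2.2 y hy hyo h2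

lemma d3_eq {y : Multiset ℕ} (hy : IsPartitionOf N y) (hyo : IsOrthogonal y) :
    dOp N (dOp N (dOp N y)) = dOp N y := by
  have hdy := dOp_part hy
  have hd2y := dOp_part hdy
  have hd3y := dOp_part hd2y
  apply dom_antisymm hd3y.2 hdy.2 (by rw [hd3y.1, hdy.1])
  · exact dOp_antitone hy (dOp_part hdy) (orth_le_d2 hy hyo)
  · exact orth_le_d2 hdy (dOp_orth hy)

lemma special_d2 {q : Multiset ℕ} (hq : IsPartitionOf N q) (hqo : IsOrthogonal q) :
    IsSpecialOrth N (dOp N (dOp N q)) := by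
  show orthCollapse N (transpose (orthCollapse N (transpose (dOp N (dOp N q)))))
      = dOp N (dOp N q)
  have : orthCollapse N (transpose (orthCollapse N (transpose (dOp N (dOp N q)))))
      = dOp N (dOp N (dOp N (dOp N q))) := rfl
  rw [this]
  exact d3_eq (dOp_part hq) (dOp_orth hq)

lemma expansion_eq {q : Multiset ℕ} (hq : IsPartitionOf N q) (hqo : IsOrthogonal q) :
    orthExpansion N q = dOp N (dOp N q) := by
  set e := dOp N (dOp N q) with he
  have hespec : IsExpansionOf IsOrthogonal (IsSpecialOrth N) N q e := by
    refine ⟨dOp_part (dOp_part hq), dOp_orth (dOp_part hq), special_d2 hq hqo,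
      orth_le_d2 hq hqo, ?_⟩
    intro q' hq'p hq'o hq's hq'd
    have h1 : DomLE e (dOp N (dOp N q')) :=
      dOp_antitone (dOp_part hq'p) (dOp_part hq) (dOp_antitone hq hq'p hq'd)
    have h2 : dOp N (dOp N q') = q' := hq's
    rwa [h2] at h1
  have hex : ∃ w, IsExpansionOf IsOrthogonal (IsSpecialOrth N) N q w := ⟨e, hespec⟩
  rw [orthExpansion, expansionOf, dif_pos hex]
  have hspec := hex.choose_spec
  apply dom_antisymm hspec.1.2 (dOp_part (dOp_part hq)).2
    (by rw [hspec.1.1, (dOp_part (dOp_part hq)).1])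
  · exact hspec.2.2.2.2 e hespec.1 hespec.2.1 hespec.2.2.1 hespec.2.2.2.1
  · exact hespec.2.2.2.2 _ hspec.1 hspec.2.1 hspec.2.2.1 hspec.2.2.2.1

end DOp


/-! ### pPlus -/

section PPlus

variable {x : Multiset ℕ}

lemma psum_one_eq (x : Multiset ℕ) :
    psum x 1 = Multiset.countP (fun j => 1 ≤ dl x (j + 1)) (Multiset.range x.sum) := by
  rw [psum_def', countP_range]
  apply Finset.sum_congr rfl
  intro j _
  rcases Nat.eq_zero_or_pos (dl x (j + 1)) with h | h
  · rw [h, if_neg (by omega)]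
    simp
  · rw [min_eq_left (by omega), if_pos (by omega)]

lemma maxPart_count (x : Multiset ℕ) :
    maxPart x = Multiset.countP (fun j => 1 ≤ dl x (j + 1)) (Multiset.range x.sum) := by
  rw [maxPart, psum_one_eq]

lemma le_maxPart (hx : 0 ∉ x) {a : ℕ} (ha : a ∈ x) : a ≤ maxPart x := by
  have ha1 : 1 ≤ a := by
    rcases Nat.eq_zero_or_pos a with rfl | h
    · exact absurd ha hx
    · exact h
  have hC := maxPart_count x
  have hseg := seg_count (P := fun j => 1 ≤ dl x (j + 1))
    (fun u v huv hv => le_trans hv (dl_anti x (by omega))) (N := x.sum) (i := a - 1)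
  have hP : 1 ≤ dl x (a - 1 + 1) := by
    rw [show a - 1 + 1 = a by omega]
    rw [dl]
    exact Multiset.countP_pos.mpr ⟨a, ha, le_rfl⟩
  have haN : a - 1 < x.sum := by
    have := mem_le_sum ha
    omega
  have := hseg.mpr ⟨haN, hP⟩
  omega

lemma maxPart_mem (hx : 0 ∉ x) (hne : x ≠ 0) : maxPart x ∈ x := by
  obtain ⟨a, ha⟩ := Multiset.exists_mem_of_ne_zero hne
  have ha1 : 1 ≤ a := by
    rcases Nat.eq_zero_or_pos a with rfl | h
    · exact absurd ha hx
    · exact h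
  have hM1 : 1 ≤ maxPart x := le_trans ha1 (le_maxPart hx ha)
  have hC := maxPart_count x
  have hseg := seg_count (P := fun j => 1 ≤ dl x (j + 1))
    (fun u v huv hv => le_trans hv (dl_anti x (by omega))) (N := x.sum) (i := maxPart x - 1)
  have h2 := hseg.mp (by omega)
  have hP : 1 ≤ dl x (maxPart x) := by
    have h3 := h2.2
    rwa [show maxPart x - 1 + 1 = maxPart x by omega] at h3
  have hP' : 0 < Multiset.countP (fun b => maxPart x ≤ b) x := hP
  obtain ⟨b, hb, hMb⟩ := Multiset.countP_pos.mp hP'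
  have hbM : b ≤ maxPart x := le_maxPart hx hb
  have hbe : b = maxPart x := le_antisymm hbM hMb
  rwa [← hbe]

lemma dl_maxPart_succ (hx : 0 ∉ x) : dl x (maxPart x + 1) = 0 := by
  rw [dl, Multiset.countP_eq_zero]
  intro a ha h
  have := le_maxPart hx ha
  omega

lemma pPlus_eq (hx : 0 ∉ x) (hne : x ≠ 0) :
    pPlus x = (maxPart x + 1) ::ₘ x.erase (maxPart x) := rfl

lemma pPlus_sum (hx : 0 ∉ x) (hne : x ≠ 0) : (pPlus x).sum = x.sum + 1 := by
  rw [pPlus, Multiset.sum_cons]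
  have hxe : maxPart x ::ₘ x.erase (maxPart x) = x := Multiset.cons_erase (maxPart_mem hx hne)
  have : x.sum = maxPart x + (x.erase (maxPart x)).sum := by
    conv_lhs => rw [← hxe]
    rw [Multiset.sum_cons]
  omega

lemma pPlus_notin (hx : 0 ∉ x) : 0 ∉ pPlus x := by
  rw [pPlus]
  intro h
  rcases Multiset.mem_cons.mp h with h | h
  · omega
  · exact hx (Multiset.mem_of_mem_erase h)

lemma pPlus_partition {N : ℕ} (hp : IsPartitionOf N x) (hne : x ≠ 0) :
    IsPartitionOf (N + 1) (pPlus x) :=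
  ⟨by rw [pPlus_sum hp.2 hne, hp.1], pPlus_notin hp.2⟩

lemma dl_pPlus (hx : 0 ∉ x) (hne : x ≠ 0) (u : ℕ) :
    dl (pPlus x) u = dl x u + if u = maxPart x + 1 then 1 else 0 := by
  set M := maxPart x with hM
  have hxe : M ::ₘ x.erase M = x := Multiset.cons_erase (maxPart_mem hx hne)
  have h1 : dl x u = dl (x.erase M) u + if u ≤ M then 1 else 0 := by
    conv_lhs => rw [← hxe]
    exact dl_cons M (x.erase M) u
  have h2 : dl (pPlus x) u = dl (x.erase M) u + if u ≤ M + 1 then 1 else 0 :=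
    dl_cons (M + 1) (x.erase M) u
  have h3 : dl x (M + 1) = 0 := dl_maxPart_succ hx
  split_ifs at h1 h2 ⊢ <;> omega

lemma Tf_pPlus (hx : 0 ∉ x) (hne : x ≠ 0) (m : ℕ) :
    Tf (pPlus x) m = Tf x m + if maxPart x + 1 ≤ m then 1 else 0 := by
  rw [Tf, Tf]
  have h1 : ∀ u ∈ Finset.range m, dl (pPlus x) (u + 1)
      = dl x (u + 1) + if u = maxPart x then 1 else 0 := by
    intro u _
    rw [dl_pPlus hx hne]
    congr 1
    split_ifs <;> omega
  rw [Finset.sum_congr rfl h1, Finset.sum_add_distrib]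
  congr 1
  rw [Finset.sum_ite_eq' (Finset.range m) (maxPart x) (fun _ => 1)]
  split_ifs with h1 h2 h2 <;> first | rfl | (exfalso; simp [Finset.mem_range] at h1; omega)

lemma psum_pPlus (hx : 0 ∉ x) (hne : x ≠ 0) {k : ℕ} (hk : 1 ≤ k) :
    psum (pPlus x) k = psum x k + 1 := by
  set M := maxPart x with hM
  have hMN : M ≤ x.sum := mem_le_sum (maxPart_mem hx hne)
  rw [psum_def', psum_def', pPlus_sum hx hne]
  have h1 : ∀ j ∈ Finset.range (x.sum + 1), min k (dl (pPlus x) (j + 1))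
      = min k (dl x (j + 1)) + if j = M then 1 else 0 := by
    intro j _
    rw [dl_pPlus hx hne]
    by_cases h : j = M
    · rw [if_pos (show j + 1 = maxPart x + 1 by omega), if_pos h]
      have h0 : dl x (j + 1) = 0 := by
        rw [show j + 1 = maxPart x + 1 by omega]
        exact dl_maxPart_succ hx
      rw [h0]
      omega
    · rw [if_neg (show ¬ j + 1 = maxPart x + 1 by omega), if_neg h]
      omega
  rw [Finset.sum_congr rfl h1, Finset.sum_add_distrib]
  congr 1
  · rw [Finset.sum_range_succ]
    have h0 : dl x (x.sum + 1) = 0 := dl_eq_zero (by omega)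
    rw [h0]
    simp
  · rw [Finset.sum_ite_eq' (Finset.range (x.sum + 1)) M (fun _ => 1)]
    rw [if_pos (Finset.mem_range.mpr (by omega))]

end PPlus


/-! ### greedy parity-correction -/

lemma greedy {g : ℕ → ℕ} {Nn : ℕ}
    (gmono : ∀ m, g m ≤ g (m + 1))
    (gconc : ∀ m, g (m + 2) + g m ≤ g (m + 1) + g (m + 1))
    (gle : ∀ m, g m ≤ Nn) :
    ∃ e : ℕ → ℕ, (∀ m, e m ≤ 1) ∧ e 0 = 0 ∧
      (∀ m, 1 ≤ m → g m = Nn → e m = 0) ∧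
      (∀ m, m % 2 = 1 → (g m + e m) % 2 = Nn % 2) ∧
      (∀ m, g m + e m ≤ g (m + 1) + e (m + 1)) ∧
      (∀ m, (g (m + 2) + e (m + 2)) + (g m + e m)
          ≤ (g (m + 1) + e (m + 1)) + (g (m + 1) + e (m + 1))) := by
  classical
  set E : ℕ → ℕ := fun m =>
    if m = 0 then 0
    else if m % 2 = 1 then (if g m % 2 = Nn % 2 then 0 else 1)
    else (if (¬ g (m - 1) % 2 = Nn % 2) ∧ (¬ g (m + 1) % 2 = Nn % 2) then 1 else 0)
    with hE
  have hE0 : E 0 = 0 := by simp [hE]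
  have hEodd : ∀ m, m % 2 = 1 → E m = (if g m % 2 = Nn % 2 then 0 else 1) := by
    intro m hm
    simp only [hE]
    rw [if_neg (by omega), if_pos hm]
  have hEeven : ∀ m, m ≠ 0 → m % 2 = 0 →
      E m = (if (¬ g (m - 1) % 2 = Nn % 2) ∧ (¬ g (m + 1) % 2 = Nn % 2) then 1 else 0) := by
    intro m hm0 hm
    simp only [hE]
    rw [if_neg hm0, if_neg (by omega)]
  have hle1 : ∀ m, E m ≤ 1 := by
    intro m
    simp only [hE]
    split_ifs <;> omega
  have hflat : ∀ m, 1 ≤ m → g m = Nn → E m = 0 := by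
    intro m hm1 hgm
    rcases Nat.even_or_odd m with hpar | hpar
    · have hp := Nat.even_iff.mp hpar
      rw [hEeven m (by omega) hp]
      have h1 : g (m + 1) = Nn := le_antisymm (gle (m + 1)) (hgm ▸ gmono m)
      rw [if_neg (by rw [h1]; tauto)]
    · have hp := Nat.odd_iff.mp hpar
      rw [hEodd m hp, if_pos (by rw [hgm])]
  have hparity : ∀ m, m % 2 = 1 → (g m + E m) % 2 = Nn % 2 := by
    intro m hm
    rw [hEodd m hm]
    split_ifs with h <;> omega
  have hmono : ∀ m, g m + E m ≤ g (m + 1) + E (m + 1) := by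
    intro m
    rcases Nat.eq_zero_or_pos m with rfl | hm1
    · rw [hE0]
      have := gmono 0
      omega
    rcases Nat.even_or_odd m with hpar | hpar
    · -- m even, ≥ 2 ; m+1 odd
      have hp := Nat.even_iff.mp hpar
      rw [hEeven m (by omega) hp, hEodd (m + 1) (by omega)]
      by_cases hc : (¬ g (m - 1) % 2 = Nn % 2) ∧ (¬ g (m + 1) % 2 = Nn % 2)
      · rw [if_pos hc, if_neg hc.2]
        have := gmono m
        omega
      · rw [if_neg hc]
        have := gmono m
        split_ifs <;> omega
    · -- m odd ; m+1 even
      have hp := Nat.odd_iff.mp hpar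
      rw [hEodd m hp, hEeven (m + 1) (by omega) (by omega)]
      by_cases hgm : g m % 2 = Nn % 2
      · rw [if_pos hgm]
        have := gmono m
        split_ifs <;> omega
      · rw [if_neg hgm]
        by_cases hgt : g m < g (m + 1)
        · split_ifs <;> omega
        · have heq : g (m + 1) = g m := by
            have := gmono m
            omega
          have heq2 : g (m + 2) = g m := by
            have h1 := gconc m
            have h2 := gmono (m + 1)
            have h3 : g (m + 1 + 1) = g (m + 2) := rfl
            omega
          have hc : (¬ g (m + 1 - 1) % 2 = Nn % 2) ∧ (¬ g (m + 1 + 1) % 2 = Nn % 2) := by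
            constructor
            · rw [show m + 1 - 1 = m from rfl]
              exact hgm
            · rw [show m + 1 + 1 = m + 2 from rfl, heq2]
              exact hgm
          rw [if_pos hc, heq]
  have hconc : ∀ m, (g (m + 2) + E (m + 2)) + (g m + E m)
      ≤ (g (m + 1) + E (m + 1)) + (g (m + 1) + E (m + 1)) := by
    intro m
    have hgc := gconc m
    rcases Nat.even_or_odd m with hpar | hpar
    · -- m even, m+1 odd, m+2 even
      have hp := Nat.even_iff.mp hpar
      rw [hEodd (m + 1) (by omega)]
      by_cases hg1 : g (m + 1) % 2 = Nn % 2
      · rw [if_pos hg1]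
        have hEm : E m = 0 := by
          rcases Nat.eq_zero_or_pos m with rfl | hm1
          · exact hE0
          · rw [hEeven m (by omega) hp]
            rw [if_neg (by intro hc; exact hc.2 hg1)]
        have hEm2 : E (m + 2) = 0 := by
          rw [hEeven (m + 2) (by omega) (by omega)]
          rw [if_neg (by
            intro hc
            exact hc.1 (by rw [show m + 2 - 1 = m + 1 from rfl]; exact hg1))]
        rw [hEm, hEm2]
        omega
      · rw [if_neg hg1]
        have h1 := hle1 m
        have h2 := hle1 (m + 2)
        omega
    · -- m odd, m+1 even, m+2 odd
      have hp := Nat.odd_iff.mp hpar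
      rw [hEeven (m + 1) (by omega) (by omega), hEodd m hp, hEodd (m + 2) (by omega)]
      rw [show m + 1 - 1 = m from rfl, show m + 1 + 1 = m + 2 from rfl]
      by_cases hc : (¬ g m % 2 = Nn % 2) ∧ (¬ g (m + 2) % 2 = Nn % 2)
      · rw [if_pos hc]
        split_ifs <;> omega
      · rw [if_neg hc]
        by_cases h1 : g m % 2 = Nn % 2 <;> by_cases h2 : g (m + 2) % 2 = Nn % 2
        · rw [if_pos h1, if_pos h2]; omega
        · rw [if_pos h1, if_neg h2]; omega
        · rw [if_neg h1, if_pos h2]; omega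
        · exact absurd ⟨h1, h2⟩ hc
  exact ⟨E, hle1, hE0, hflat, hparity, hmono, hconc⟩

/-- Witness lemma: for any partition `x` of `N₀` and any column `k`, there is an
orthogonal partition of `N₀+1` dominated by `x⁺` whose first `k` columns contain
at most `Tf x k + 1` boxes. -/
lemma witness_W {N₀ : ℕ} {x : Multiset ℕ} (hx : IsPartitionOf N₀ x) (hne : x ≠ 0) (k : ℕ) :
    ∃ qw, IsPartitionOf (N₀ + 1) qw ∧ IsOrthogonal qw ∧ DomLE qw (pPlus x) ∧
      Tf qw k ≤ Tf x k + 1 := by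
  classical
  set b := pPlus x with hb
  have hbp : IsPartitionOf (N₀ + 1) b := pPlus_partition hx hne
  set Nn := N₀ + 1 with hNn
  set g : ℕ → ℕ := fun m => Tf b m with hg
  have gmono : ∀ m, g m ≤ g (m + 1) := fun m => Tf_mono b (by omega)
  have gconc : ∀ m, g (m + 2) + g m ≤ g (m + 1) + g (m + 1) := fun m => Tf_concave b m
  have gle : ∀ m, g m ≤ Nn := fun m => by
    have := Tf_le_sum b m
    rw [hbp.1] at this
    exact this
  obtain ⟨e, he1, he0, heflat, hepar, hemono, heconc⟩ := greedy gmono gconc gle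
  set σ : ℕ → ℕ := fun m => g m + e m with hσ
  set d' : ℕ → ℕ := fun u => σ u - σ (u - 1) with hd'
  have hσmono : ∀ m, σ m ≤ σ (m + 1) := hemono
  have hanti : ∀ u, d' (u + 2) ≤ d' (u + 1) := by
    intro u
    have h1 : σ (u + 2) + σ u ≤ σ (u + 1) + σ (u + 1) := heconc u
    have h2 := hσmono u
    have h3 : σ (u + 1) ≤ σ (u + 1 + 1) := hσmono (u + 1)
    have e1 : σ (u + 1 + 1) = σ (u + 2) := rfl
    have e2 : d' (u + 2) = σ (u + 2) - σ (u + 1) := rfl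
    have e3 : d' (u + 1) = σ (u + 1) - σ u := rfl
    omega
  have hgN : ∀ m, Nn ≤ m → g m = Nn := by
    intro m hm
    have h : Tf b m = b.sum := Tf_stab (by rw [hbp.1]; omega)
    show Tf b m = Nn
    rw [h, hbp.1]
  have hσN : ∀ m, Nn ≤ m → σ m = Nn := by
    intro m hm
    have h1 := hgN m hm
    have h2 := heflat m (by omega) h1
    simp only [hσ]
    omega
  have hB : d' (Nn + 1) = 0 := by
    have h4 : d' (Nn + 1) = σ (Nn + 1) - σ Nn := rfl
    have h5 := hσN (Nn + 1) (by omega)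
    have h6 := hσN Nn le_rfl
    omega
  set qw : Multiset ℕ := realize d' Nn with hqw
  have hσ0 : σ 0 = 0 := by
    have h1 : σ 0 = Tf b 0 + e 0 := rfl
    rw [Tf_zero, he0] at h1
    omega
  have hTfqw : ∀ m, Tf qw m = σ m := by
    intro m
    rw [hqw, realize_Tf hanti hB]
    induction m with
    | zero => simp [hσ0]
    | succ m ih =>
      rw [Finset.sum_range_succ, ih]
      have h4 : d' (m + 1) = σ (m + 1) - σ m := rfl
      have := hσmono m
      omega
  have hqwsum : qw.sum = Nn := by
    have h1 : Tf qw Nn = σ Nn := hTfqw Nn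
    rw [Tf_stab' (fun a ha => realize_mem_le d' Nn ha)] at h1
    rw [h1, hσN Nn le_rfl]
  have hqwpart : IsPartitionOf (N₀ + 1) qw := ⟨hqwsum, realize_zero_notin d' Nn⟩
  have hqworth : IsOrthogonal qw := by
    apply orth_of_Tf_parity hqwpart.2
    intro m hm
    rw [hTfqw m, hqwsum]
    exact hepar m (Nat.odd_iff.mp hm)
  have hqwdom : DomLE qw b := by
    apply dom_of_Tf_le hbp.2 (by rw [hbp.1, hqwsum])
    intro m
    rw [hTfqw m]
    have h4 : σ m = Tf b m + e m := rfl
    omega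
  refine ⟨qw, hqwpart, hqworth, hqwdom, ?_⟩
  rw [hTfqw k]
  have hσk : σ k = Tf b k + e k := rfl
  have hTb : Tf b k = Tf x k + if maxPart x + 1 ≤ k then 1 else 0 := Tf_pPlus hx.2 hne k
  rcases le_or_gt (maxPart x + 1) k with hk | hk
  · rw [if_pos hk] at hTb
    have hxk : Tf x k = N₀ := by
      rw [Tf_stab' (fun a ha => le_trans (le_maxPart hx.2 ha) (by omega)), hx.1]
    have hek : e k = 0 := by
      apply heflat k (by omega)
      have : g k = Tf b k := rfl
      omega
    omega
  · rw [if_neg (by omega)] at hTb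
    have := he1 k
    omega


/-! ### ingredients for the key inequality -/

lemma bump {N : ℕ} (hN : N % 2 = 1) {z y : Multiset ℕ} (hz : IsPartitionOf N z)
    (hzo : IsOrthogonal z) (hy : IsPartitionOf N y) (hdom : DomLE z y) {m : ℕ}
    (hm : m % 2 = 1) (hTy : Tf y m % 2 = 0) (k : ℕ) :
    psum z k + Tf y m + 1 ≤ k * m + N := by
  have h1 := psum_L1 z k m
  have h2 : Tf z m % 2 = z.sum % 2 := orth_Tf_parity hzo (Nat.odd_iff.mpr hm)
  have h3 : Tf y m ≤ Tf z m := Tf_le_of_dom (by rw [hy.1, hz.1]) hdom m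
  rw [hz.1] at h2
  rw [hz.1] at h1
  omega

lemma psum_succ' (p : Multiset ℕ) (t : ℕ) :
    psum p (t + 1) = psum p t + dl (transpose p) (t + 1) := by
  rw [psum_eq_Tf_transpose p (t + 1), psum_eq_Tf_transpose p t, Tf_succ]

lemma filter_sum_eq (p : Multiset ℕ) (k : ℕ) :
    (p.filter (fun a => k + 1 ≤ a)).sum = (p.map (fun a => a - k)).sum + k * dl p (k + 1) := by
  induction p using Multiset.induction with
  | empty => simp [dl]
  | cons a s ih =>
    rw [Multiset.filter_cons, Multiset.map_cons, Multiset.sum_cons, dl_cons]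
    split_ifs with h
    · rw [Multiset.sum_add, Multiset.sum_singleton, ih]
      have : k * (dl s (k + 1) + 1) = k * dl s (k + 1) + k := by ring
      rw [this]
      omega
    · rw [Multiset.sum_add]
      simp only [Multiset.sum_zero, ih]
      have ha : a - k = 0 := by omega
      have hr : k * (dl s (k + 1) + 0) = k * dl s (k + 1) := by ring
      rw [ha]
      omega

/-- The key inequality (Theorem 4.2's combinatorial heart):
for a symplectic partition `p` of `2n`,
`psum (ca) k + psum (cb) j ≤ kj + 2n+1` where `ca, cb` are the orthogonal collapses
of `(pᵗ)⁺` and `p⁺`. -/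
lemma key_ineq {n : ℕ} (hn : 1 ≤ n) {p : Multiset ℕ} (hp : IsPartitionOf (2 * n) p)
    (hsymp : IsSymplectic p) (k j : ℕ) :
    psum (orthCollapse (2 * n + 1) (pPlus (transpose p))) k
      + psum (orthCollapse (2 * n + 1) (pPlus p)) j ≤ k * j + (2 * n + 1) := by
  classical
  set N := 2 * n + 1 with hN
  have hpne : p ≠ 0 := by
    intro h
    rw [h] at hp
    have := hp.1
    simp at this
    omega
  set tp := transpose p with htp
  have htpp : IsPartitionOf (2 * n) tp := transpose_partition hp
  have htpne : tp ≠ 0 := by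
    intro h
    rw [h] at htpp
    have := htpp.1
    simp at this
    omega
  set a := pPlus tp with ha
  set b := pPlus p with hb
  have hap : IsPartitionOf N a := by
    rw [hN, ha]
    exact pPlus_partition htpp htpne
  have hbp : IsPartitionOf N b := by
    rw [hN, hb]
    exact pPlus_partition hp hpne
  have caS := orthCollapse_spec hap
  have cbS := orthCollapse_spec hbp
  set ca := orthCollapse N a with hca
  set cb := orthCollapse N b with hcb
  -- trivial cases k = 0 or j = 0
  rcases Nat.eq_zero_or_pos k with rfl | hk
  · rw [psum_zero]
    have h1 := psum_le_sum cb j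
    rw [cbS.1.1] at h1
    omega
  rcases Nat.eq_zero_or_pos j with rfl | hj
  · rw [psum_zero]
    have h1 := psum_le_sum ca k
    rw [caS.1.1] at h1
    omega
  -- upper bounds
  have upper1 : psum ca k ≤ Tf p k + 1 := by
    have h1 := caS.2.2.1 k
    have h2 : psum a k = psum tp k + 1 := psum_pPlus htpp.2 htpne hk
    rw [psum_transpose hp.2 k] at h2
    omega
  have upper2 : psum cb j ≤ psum p j + 1 := by
    have h1 := cbS.2.2.1 j
    have h2 : psum b j = psum p j + 1 := psum_pPlus hp.2 hpne hj
    omega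
  have base := psum_L1 p j k
  rw [hp.1] at base
  by_cases htight : psum p j + Tf p k = j * k + 2 * n
  case neg =>
    have hjk : j * k = k * j := Nat.mul_comm j k
    omega
  -- tight case
  set j₀ := dl p (k + 1) with hj₀
  set j₁ := dl p k with hj₁
  -- j ≤ j₁
  have hjj1 : j ≤ j₁ := by
    by_contra hc
    obtain ⟨k', rfl⟩ : ∃ k', k = k' + 1 := ⟨k - 1, by omega⟩
    have h1 := psum_L1 p j k'
    rw [hp.1] at h1
    have h2 : Tf p (k' + 1) = Tf p k' + dl p (k' + 1) := Tf_succ p k'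
    have h3 : j * (k' + 1) = j * k' + j := by ring
    omega
  -- j₀ ≤ j
  have hj0j : j₀ ≤ j := by
    by_contra hc
    have h1 := psum_L1 p j (k + 1)
    rw [hp.1] at h1
    have h2 : Tf p (k + 1) = Tf p k + dl p (k + 1) := Tf_succ p k
    have h3 : j * (k + 1) = j * k + j := by ring
    omega
  -- tightness all along the block
  have htAll : ∀ m', j₀ ≤ m' → m' ≤ j₁ → psum p m' + Tf p k = m' * k + 2 * n := by
    have hstep : ∀ t, j₀ + t ≤ j₁ → psum p (j₀ + t) + Tf p k = (j₀ + t) * k + 2 * n := by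
      intro t
      induction t with
      | zero =>
        intro _
        have h5 := psum_L5 p k
        rw [hp.1, ← hj₀] at h5
        rw [show j₀ + 0 = j₀ by omega]
        exact h5
      | succ t ih =>
        intro hble
        have ih' := ih (by omega)
        have hsucc : psum p (j₀ + t + 1) = psum p (j₀ + t) + dl tp (j₀ + t + 1) := by
          rw [htp]
          exact psum_succ' p (j₀ + t)
        have hle : dl tp (j₀ + t + 1) ≤ k := by
          by_contra hc
          rw [htp] at hc
          have h4 : (j₀ + t) + 1 ≤ dl p (k + 1) :=
            (dl_transpose_iff p (j₀ + t) k).mp (by omega)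
          omega
        have hge : k ≤ dl tp (j₀ + t + 1) := by
          rw [htp]
          obtain ⟨k', rfl⟩ : ∃ k', k = k' + 1 := ⟨k - 1, by omega⟩
          have h4 : (j₀ + t) + 1 ≤ dl p (k' + 1) → k' + 1 ≤ dl (transpose p) ((j₀ + t) + 1) :=
            (dl_transpose_iff p (j₀ + t) k').mpr
          apply h4
          omega
        have heq : dl tp (j₀ + t + 1) = k := le_antisymm hle hge
        have h6 : (j₀ + t + 1) * k = (j₀ + t) * k + k := by ring
        rw [show j₀ + (t + 1) = j₀ + t + 1 by omega]
        omega
    intro m' h1 h2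
    have := hstep (m' - j₀) (by omega)
    rwa [show j₀ + (m' - j₀) = m' by omega] at this
  -- psum p j₀ is even (symplecticity!)
  have hEeven : psum p j₀ % 2 = 0 := by
    have h5 := psum_L5 p k
    rw [hp.1, ← hj₀] at h5
    have h6 := Tf_add_rest p k
    rw [hp.1] at h6
    have h7 := filter_sum_eq p k
    rw [← hj₀] at h7
    have h8 := symp_filter_even hsymp (k + 1)
    have h9 : k * j₀ = j₀ * k := Nat.mul_comm _ _
    omega
  -- maxPart bounds
  have hmaxp : k ≤ maxPart p := by
    have h1 : 0 < dl p k := by omega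
    obtain ⟨c, hc, hkc⟩ := Multiset.countP_pos.mp h1
    exact le_trans hkc (le_maxPart hp.2 hc)
  have hmaxtp : j₁ ≤ maxPart tp := by
    have h0 : dl p 1 ∈ transpose p := by
      rw [transpose_def, Multiset.mem_filter]
      constructor
      · apply Multiset.mem_map.mpr
        refine ⟨0, ?_, rfl⟩
        rw [Multiset.mem_range, hp.1]
        omega
      · have h2 : 0 < dl p 1 := by
          obtain ⟨c, hc⟩ := Multiset.exists_mem_of_ne_zero hpne
          apply Multiset.countP_pos.mpr
          refine ⟨c, hc, ?_⟩
          rcases Nat.eq_zero_or_pos c with rfl | h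
          · exact absurd hc hp.2
          · omega
        exact h2
    have h1 : dl p 1 ∈ tp := by rw [htp]; exact h0
    have h2 : j₁ ≤ dl p 1 := dl_anti p hk
    exact le_trans h2 (le_maxPart htpp.2 h1)
  -- Tf computations on a, b
  have hTfa : ∀ m', m' ≤ j₁ → Tf a m' = psum p m' := by
    intro m' hm'
    rw [ha, Tf_pPlus htpp.2 htpne m', if_neg (by omega), Nat.add_zero, htp,
      ← psum_eq_Tf_transpose]
  have hTfb : ∀ m, m ≤ k → Tf b m = Tf p m := by
    intro m hm
    rw [hb, Tf_pPlus hp.2 hpne m, if_neg (by omega), Nat.add_zero]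
  -- A-side finisher
  have hAside : ∀ m', m' % 2 = 1 → j₀ ≤ m' → m' ≤ j₁ → psum p m' % 2 = 0 →
      psum ca k + psum cb j ≤ k * j + N := by
    intro m' hodd h0 h1 hpar
    have hTa : Tf a m' = psum p m' := hTfa m' h1
    have hbump := bump (by omega : N % 2 = 1) caS.1 caS.2.1 hap caS.2.2.1 hodd
      (by rw [hTa]; exact hpar) k
    have hid1 := htAll m' h0 h1
    have hid2 := htAll j hj0j hjj1
    have hc1 : m' * k = k * m' := Nat.mul_comm _ _
    have hc2 : j * k = k * j := Nat.mul_comm _ _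
    omega
  -- B-side finisher
  have hBside : ∀ m, m % 2 = 1 → m ≤ k → Tf p m % 2 = 0 →
      Tf p k + m * j = Tf p m + k * j →
      psum ca k + psum cb j ≤ k * j + N := by
    intro m hodd h1 hpar hid
    have hTb : Tf b m = Tf p m := hTfb m h1
    have hbump := bump (by omega : N % 2 = 1) cbS.1 cbS.2.1 hbp cbS.2.2.1 hodd
      (by rw [hTb]; exact hpar) j
    have hc1 : j * m = m * j := Nat.mul_comm _ _
    omega
  -- parity of products
  have hmulE : ∀ u v : ℕ, v % 2 = 0 → (u * v) % 2 = 0 := by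
    intro u v hv
    rw [Nat.mul_mod, hv, Nat.mul_zero]
  have hmulO : ∀ u v : ℕ, v % 2 = 1 → (u * v) % 2 = u % 2 := by
    intro u v hv
    rw [Nat.mul_mod, hv, Nat.mul_one]
    omega
  -- case analysis
  rcases Nat.even_or_odd k with hke | hko
  · -- k even
    have hke' := Nat.even_iff.mp hke
    have hpj : psum p j % 2 = 0 := by
      have h1 := htAll j hj0j hjj1
      have h2 := htAll j₀ le_rfl (by omega)
      have h3 := hmulE j k hke'
      have h4 := hmulE j₀ k hke'
      omega
    rcases Nat.even_or_odd j with hje | hjo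
    · -- j even
      have hje' := Nat.even_iff.mp hje
      rcases Nat.lt_or_ge j j₁ with hlt | hge
      · -- j < j₁ : A-side with m' = j + 1
        apply hAside (j + 1) (by omega) (by omega) (by omega)
        have h1 := htAll (j + 1) (by omega) (by omega)
        have h2 := htAll j₀ le_rfl (by omega)
        have h3 := hmulE (j + 1) k hke'
        have h4 := hmulE j₀ k hke'
        omega
      · -- j = j₁ : B-side with m = k - 1
        have hk2 : 2 ≤ k := by omega
        obtain ⟨k', rfl⟩ : ∃ k', k = k' + 1 := ⟨k - 1, by omega⟩
        have hTk : Tf p (k' + 1) = Tf p k' + dl p (k' + 1) := Tf_succ p k'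
        have hdlj : dl p (k' + 1) = j := by omega
        have hTkpar : Tf p (k' + 1) % 2 = 0 := by
          have h1 := htAll j hj0j hjj1
          have h3 := hmulE j (k' + 1) hke'
          omega
        apply hBside k' (by omega) (by omega) (by omega)
        -- Tf p (k'+1) + k' * j = Tf p k' + (k'+1) * j
        have h6 : (k' + 1) * j = k' * j + j := by ring
        omega
    · -- j odd : A-side with m' = j
      exact hAside j (Nat.odd_iff.mp hjo) hj0j hjj1 hpj
  · -- k odd
    have hko' := Nat.odd_iff.mp hko
    rcases Nat.even_or_odd j₀ with hj0e | hj0o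
    · -- j₀ even : B-side with m = k
      have hj0e' := Nat.even_iff.mp hj0e
      have hTkpar : Tf p k % 2 = 0 := by
        have h1 := htAll j hj0j hjj1
        have h2 := htAll j₀ le_rfl (by omega)
        have h3 := hmulO j k hko'
        have h4 := hmulO j₀ k hko'
        omega
      exact hBside k hko' le_rfl hTkpar (by ring_nf)
    · -- j₀ odd : A-side with m' = j₀
      exact hAside j₀ (Nat.odd_iff.mp hj0o) le_rfl (by omega) hEeven


/-! ### the two collapse identities F1 and F1' -/

section F1

variable {n : ℕ} (hn : 1 ≤ n) {p : Multiset ℕ} (hp : IsPartitionOf (2 * n) p)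
  (hsymp : IsSymplectic p)

include hn hp hsymp

lemma setup_facts :
    p ≠ 0 ∧ transpose p ≠ 0 ∧ IsPartitionOf (2 * n) (transpose p)
      ∧ IsPartitionOf (2 * n + 1) (pPlus (transpose p))
      ∧ IsPartitionOf (2 * n + 1) (pPlus p) := by
  have hpne : p ≠ 0 := by
    intro h
    rw [h] at hp
    have := hp.1
    simp at this
    omega
  have htpp : IsPartitionOf (2 * n) (transpose p) := transpose_partition hp
  have htpne : transpose p ≠ 0 := by
    intro h
    rw [h] at htpp
    have := htpp.1
    simp at this
    omega
  exact ⟨hpne, htpne, htpp, pPlus_partition htpp htpne, pPlus_partition hp hpne⟩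

/-- `Tf (cb) k ≤ Tf p k + 1` : the collapse of `p⁺` stays within one box per column
range of `p`. -/
lemma star_b (k : ℕ) :
    Tf (orthCollapse (2 * n + 1) (pPlus p)) k ≤ Tf p k + 1 := by
  obtain ⟨hpne, htpne, htpp, hap, hbp⟩ := setup_facts hn hp hsymp
  have cbS := orthCollapse_spec hbp
  obtain ⟨qw, hqwp, hqwo, hqwd, hqwT⟩ := witness_W hp hpne k
  have h1 : DomLE qw (orthCollapse (2 * n + 1) (pPlus p)) :=
    cbS.2.2.2 qw hqwp hqwo hqwd
  have h2 : Tf (orthCollapse (2 * n + 1) (pPlus p)) k ≤ Tf qw k :=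
    Tf_le_of_dom (by rw [cbS.1.1, hqwp.1]) h1 k
  omega

lemma star_a (k : ℕ) :
    Tf (orthCollapse (2 * n + 1) (pPlus (transpose p))) k ≤ psum p k + 1 := by
  obtain ⟨hpne, htpne, htpp, hap, hbp⟩ := setup_facts hn hp hsymp
  have caS := orthCollapse_spec hap
  obtain ⟨qw, hqwp, hqwo, hqwd, hqwT⟩ := witness_W htpp htpne k
  have h1 : DomLE qw (orthCollapse (2 * n + 1) (pPlus (transpose p))) :=
    caS.2.2.2 qw hqwp hqwo hqwd
  have h2 : Tf (orthCollapse (2 * n + 1) (pPlus (transpose p))) k ≤ Tf qw k :=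
    Tf_le_of_dom (by rw [caS.1.1, hqwp.1]) h1 k
  have h3 : psum p k = Tf (transpose p) k := psum_eq_Tf_transpose p k
  omega

lemma F1_lemma :
    orthCollapse (2 * n + 1) (transpose (orthCollapse (2 * n + 1) (pPlus p)))
      = orthCollapse (2 * n + 1) (pPlus (transpose p)) := by
  obtain ⟨hpne, htpne, htpp, hap, hbp⟩ := setup_facts hn hp hsymp
  set N := 2 * n + 1 with hN
  have caS := orthCollapse_spec hap
  have cbS := orthCollapse_spec hbp
  set ca := orthCollapse N (pPlus (transpose p)) with hca
  set cb := orthCollapse N (pPlus p) with hcb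
  have htcb : IsPartitionOf N (transpose cb) := transpose_partition cbS.1
  have dS := orthCollapse_spec htcb
  set dcb := orthCollapse N (transpose cb) with hdcb
  -- (i) DomLE dcb (pPlus (transpose p)) hence DomLE dcb ca
  have hi : DomLE dcb ca := by
    have h1 : DomLE (transpose cb) (pPlus (transpose p)) := by
      intro k
      rcases Nat.eq_zero_or_pos k with rfl | hk
      · rw [psum_zero, psum_zero]
      rw [psum_transpose cbS.1.2 k, psum_pPlus htpp.2 htpne hk,
        psum_transpose hp.2 k]
      exact star_b hn hp hsymp k
    have h2 : DomLE dcb (pPlus (transpose p)) := dom_trans dS.2.2.1 h1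
    exact caS.2.2.2 dcb dS.1 dS.2.1 h2
  -- (ii) DomLE ca dcb
  have hii : DomLE ca dcb := by
    have h1 : DomLE ca (transpose cb) := by
      intro k
      rw [psum_transpose cbS.1.2 k]
      have h5 := psum_L5 cb k
      rw [cbS.1.1] at h5
      have hkey := key_ineq hn hp hsymp k (dl cb (k + 1))
      rw [← hca, ← hcb] at hkey
      have hc : dl cb (k + 1) * k = k * dl cb (k + 1) := Nat.mul_comm _ _
      omega
    exact dS.2.2.2 ca caS.1 caS.2.1 h1
  exact dom_antisymm dS.1.2 caS.1.2 (by rw [dS.1.1, caS.1.1]) hi hii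

lemma F1'_lemma :
    orthCollapse (2 * n + 1) (transpose (orthCollapse (2 * n + 1) (pPlus (transpose p))))
      = orthCollapse (2 * n + 1) (pPlus p) := by
  obtain ⟨hpne, htpne, htpp, hap, hbp⟩ := setup_facts hn hp hsymp
  set N := 2 * n + 1 with hN
  have caS := orthCollapse_spec hap
  have cbS := orthCollapse_spec hbp
  set ca := orthCollapse N (pPlus (transpose p)) with hca
  set cb := orthCollapse N (pPlus p) with hcb
  have htca : IsPartitionOf N (transpose ca) := transpose_partition caS.1
  have dS := orthCollapse_spec htca
  set dca := orthCollapse N (transpose ca) with hdca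
  have hi : DomLE dca cb := by
    have h1 : DomLE (transpose ca) (pPlus p) := by
      intro k
      rcases Nat.eq_zero_or_pos k with rfl | hk
      · rw [psum_zero, psum_zero]
      rw [psum_transpose caS.1.2 k, psum_pPlus hp.2 hpne hk]
      exact star_a hn hp hsymp k
    have h2 : DomLE dca (pPlus p) := dom_trans dS.2.2.1 h1
    exact cbS.2.2.2 dca dS.1 dS.2.1 h2
  have hii : DomLE cb dca := by
    have h1 : DomLE cb (transpose ca) := by
      intro j
      rw [psum_transpose caS.1.2 j]
      have h5 := psum_L5 ca j
      rw [caS.1.1] at h5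
      have hkey := key_ineq hn hp hsymp (dl ca (j + 1)) j
      rw [← hca, ← hcb] at hkey
      have hc : dl ca (j + 1) * j = j * dl ca (j + 1) := Nat.mul_comm _ _
      omega
    exact dS.2.2.2 cb cbS.1 cbS.2.1 h1
  exact dom_antisymm dS.1.2 cbS.1.2 (by rw [dS.1.1, cbS.1.1]) hi hii

end F1

/-! ### facts about `qqm (pOne p) (2 n* + 1)` -/

lemma sum_div2 (p : Multiset ℕ) :
    2 * (p.map (· / 2)).sum + p.countP (fun a => Odd a) = p.sum := by
  induction p using Multiset.induction with
  | empty => simp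
  | cons a s ih =>
    rw [Multiset.map_cons, Multiset.sum_cons, Multiset.countP_cons, Multiset.sum_cons]
    rcases Nat.even_or_odd a with ha | ha
    · rw [if_neg (by simpa using ha)]
      have := Nat.even_iff.mp ha
      omega
    · rw [if_pos ha]
      have := Nat.odd_iff.mp ha
      omega

lemma qqm_partition {n : ℕ} {p : Multiset ℕ} (hp : IsPartitionOf (2 * n) p)
    (hsymp : IsSymplectic p) :
    IsPartitionOf (2 * n + 1) (qqm (pOne p) (2 * nStar p + 1)) := by
  rw [qqm, if_neg (by omega)]
  constructor
  · rw [Multiset.sum_cons, Multiset.sum_add]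
    have h1 : (pOne p).sum = (p.map (· / 2)).sum := by
      rw [pOne, transpose_sum]
    have h2 := sum_div2 p
    have h3 : 2 * nStar p = p.countP (fun a => Odd a) := by
      obtain ⟨r, hr⟩ := symp_countP_odd hsymp
      rw [nStar]
      have : p.countP (fun a => Odd a) = p.countP (Odd ·) := rfl
      omega
    rw [hp.1] at h2
    omega
  · intro h
    rcases Multiset.mem_cons.mp h with h | h
    · omega
    · rcases Multiset.mem_add.mp h with h | h <;>
        exact zero_notin_transpose _ h

lemma qqm_orth {p : Multiset ℕ} {m : ℕ} (hm : m % 2 = 1) :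
    IsOrthogonal (qqm (pOne p) m) := by
  intro a ha
  rw [qqm, if_neg (by omega), Multiset.count_cons, Multiset.count_add]
  have hma : ¬ a = m := by
    intro h
    rw [Nat.even_iff] at ha
    omega
  rw [if_neg hma]
  exact ⟨(pOne p).count a, by omega⟩

end Pf

/-- Theorem 4.2(2), case `G_n = SO_{2n+1}`: for a symplectic partition `p`
of `2n`, `[p₁ p₁ (2n*+1)]^{SO_{2n+1}} = ((p^t)^+)_{SO_{2n+1}}` if and only if
`([p₁ p₁ (2n*+1)]^t)_{SO_{2n+1}} = (p^+)_{SO_{2n+1}}`. -/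
theorem criterion_so_odd (n : ℕ) (hn : 1 ≤ n) (p : Multiset ℕ)
    (hp : IsPartitionOf (2 * n) p) (hsymp : IsSymplectic p) :
    orthExpansion (2 * n + 1) (qqm (pOne p) (2 * nStar p + 1)) =
        orthCollapse (2 * n + 1) (pPlus (transpose p)) ↔
      orthCollapse (2 * n + 1) (transpose (qqm (pOne p) (2 * nStar p + 1))) =
        orthCollapse (2 * n + 1) (pPlus p) := by
  set N := 2 * n + 1 with hN
  set q := qqm (pOne p) (2 * nStar p + 1) with hq
  have hqp : IsPartitionOf N q := Pf.qqm_partition hp hsymp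
  have hqo : IsOrthogonal q := Pf.qqm_orth (by omega)
  have hexp : orthExpansion N q = Pf.dOp N (Pf.dOp N q) := Pf.expansion_eq hqp hqo
  have hF1 := Pf.F1_lemma hn hp hsymp
  have hF1' := Pf.F1'_lemma hn hp hsymp
  have hd3 := Pf.d3_eq hqp hqo
  constructor
  · intro hL
    rw [hexp] at hL
    -- dOp N q = dOp N (dOp N (dOp N q)) = dOp N ca = cb
    have h1 : Pf.dOp N (Pf.dOp N (Pf.dOp N q)) = Pf.dOp N q := hd3
    have h2 : Pf.dOp N (Pf.dOp N (Pf.dOp N q))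
        = orthCollapse N (transpose (orthCollapse N (pPlus (transpose p)))) := by
      show orthCollapse N (transpose (Pf.dOp N (Pf.dOp N q))) = _
      rw [hL]
    show orthCollapse N (transpose q) = _
    have h3 : orthCollapse N (transpose q) = Pf.dOp N q := rfl
    rw [h3, ← h1, h2, hF1']
  · intro hR
    rw [hexp]
    have h3 : Pf.dOp N q = orthCollapse N (transpose q) := rfl
    show orthCollapse N (transpose (Pf.dOp N q)) = _
    rw [h3, hR]
    exact hF1
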